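/- Let H : E° × ℝᵈ → ℝ be twice continuously differentiable and S twice continuously differentiable on E°. Define H̄(x,p) := 2H(x, p/2 + DS(x)/2). If (x(t), p(t)) solves the Hamilton equations for H on (0,T) with x(t) ∈ E°, then (x(t), 2p(t) − DS(x(t))) solves the Hamilton equations for H̄, and conversely. -/

import Mathlib

noncomputable def phiAux (d : ℕ) : ((Fin d → ℝ) →L[ℝ] ℝ) →L[ℝ] (Fin d → ℝ) :=
  ContinuousLinearMap.pi fun i => ContinuousLinearMap.apply ℝ ℝ (Pi.single i 1)

lemma phiAux_apply {d : ℕ} (L : (Fin d → ℝ) →L[ℝ] ℝ) (i : Fin d) :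
    phiAux d L i = L (Pi.single i 1) := rfl

lemma clm_eq_sum' {d : ℕ} {F : Type*} [NormedAddCommGroup F] [NormedSpace ℝ F]
    (T : (Fin d → ℝ) →L[ℝ] F) (v : Fin d → ℝ) :
    T v = ∑ j, v j • T (Pi.single j 1) := by
  have hv : v = ∑ j, (v j) • (Pi.single j 1 : Fin d → ℝ) := by
    conv_lhs => rw [← Finset.univ_sum_single v]
    refine Finset.sum_congr rfl fun j _ => ?_
    funext k
    by_cases h : k = j <;> simp [Pi.single_apply, h]
  conv_lhs => rw [hv]
  rw [map_sum]
  simp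

lemma key_symm {d : ℕ} (T : (Fin d → ℝ) →L[ℝ] ℝ)
    (B : (Fin d → ℝ) →L[ℝ] ((Fin d → ℝ) →L[ℝ] ℝ))
    (hB : ∀ v w, B v w = B w v) (i : Fin d) :
    T (phiAux d (B (Pi.single i 1))) = B (fun j => T (Pi.single j 1)) (Pi.single i 1) := by
  rw [clm_eq_sum' T (phiAux d (B (Pi.single i 1)))]
  rw [clm_eq_sum' B (fun j => T (Pi.single j 1))]
  rw [ContinuousLinearMap.sum_apply]
  refine Finset.sum_congr rfl fun j _ => ?_
  rw [phiAux_apply]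
  simp only [smul_eq_mul, ContinuousLinearMap.smul_apply]
  rw [hB (Pi.single i 1) (Pi.single j 1)]
  ring

/-- The `i`-th partial derivative (component of the gradient) of `f : (Fin d → ℝ) → ℝ`. -/
noncomputable def pgrad {d : ℕ} (f : (Fin d → ℝ) → ℝ) (x : Fin d → ℝ) : Fin d → ℝ :=
  fun i => fderiv ℝ f x (Pi.single i 1)

/-- Gradient of `H` in the momentum variable. -/
noncomputable def Hp {d : ℕ} (H : (Fin d → ℝ) → (Fin d → ℝ) → ℝ)
    (x p : Fin d → ℝ) : Fin d → ℝ := pgrad (H x) p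

/-- Gradient of `H` in the position variable. -/
noncomputable def Hx {d : ℕ} (H : (Fin d → ℝ) → (Fin d → ℝ) → ℝ)
    (x p : Fin d → ℝ) : Fin d → ℝ := pgrad (fun y => H y p) x

theorem stmt_9 (d : ℕ) (H : (Fin d → ℝ) → (Fin d → ℝ) → ℝ) (S : (Fin d → ℝ) → ℝ)
    (hH : ContDiff ℝ 2 (fun z : (Fin d → ℝ) × (Fin d → ℝ) => H z.1 z.2))
    (hS : ContDiff ℝ 2 S)
    (Hbar : (Fin d → ℝ) → (Fin d → ℝ) → ℝ)
    (hHbar : ∀ x q, Hbar x q = 2 * H x ((1 / 2 : ℝ) • q + (1 / 2 : ℝ) • pgrad S x))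
    (T : ℝ) (hT : 0 < T)
    (x p : ℝ → Fin d → ℝ)
    (q : ℝ → Fin d → ℝ) (hq : ∀ t, q t = (2 : ℝ) • p t - pgrad S (x t)) :
    (∀ t ∈ Set.Ioo (0 : ℝ) T,
      HasDerivAt x (Hp H (x t) (p t)) t ∧ HasDerivAt p (-(Hx H (x t) (p t))) t) ↔
    (∀ t ∈ Set.Ioo (0 : ℝ) T,
      HasDerivAt x (Hp Hbar (x t) (q t)) t ∧ HasDerivAt q (-(Hx Hbar (x t) (q t))) t) := by
  classical
  set HF : (Fin d → ℝ) × (Fin d → ℝ) → ℝ := fun z => H z.1 z.2 with hHFdef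
  have hHF : Differentiable ℝ HF := hH.differentiable (by norm_num)
  set L : (Fin d → ℝ) × (Fin d → ℝ) → ((Fin d → ℝ) × (Fin d → ℝ)) →L[ℝ] ℝ :=
    fun z => fderiv ℝ HF z with hLdef
  have hLd : ∀ z, HasFDerivAt HF (L z) z := fun z => (hHF z).hasFDerivAt
  have hS1 : Differentiable ℝ S := hS.differentiable (by norm_num)
  have hS2 : Differentiable ℝ (fderiv ℝ S) :=
    (hS.fderiv_right (m := 1) (by norm_num)).differentiable (by norm_num)
  set S'' : (Fin d → ℝ) → (Fin d → ℝ) →L[ℝ] ((Fin d → ℝ) →L[ℝ] ℝ) :=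
    fun a => fderiv ℝ (fderiv ℝ S) a with hS''def
  have hS2' : ∀ a, HasFDerivAt (fderiv ℝ S) (S'' a) a := fun a => (hS2 a).hasFDerivAt
  have hsymm : ∀ a v w, S'' a v w = S'' a w v := fun a v w =>
    second_derivative_symmetric (fun y => (hS1 y).hasFDerivAt) (hS2' a) v w
  -- derivative of the gradient of S
  have hgd : ∀ a, HasFDerivAt (pgrad S) ((phiAux d).comp (S'' a)) a := by
    intro a
    have heq : pgrad S = fun b => phiAux d (fderiv ℝ S b) := by
      funext b i; rfl
    rw [heq]
    exact (phiAux d).hasFDerivAt.comp a (hS2' a)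
  -- partial derivatives of H
  have hHp_eq : ∀ a b i, Hp H a b i = L (a, b) (0, Pi.single i 1) := by
    intro a b i
    have hinner : HasFDerivAt (fun y : Fin d → ℝ => (a, y))
        ((0 : (Fin d → ℝ) →L[ℝ] (Fin d → ℝ)).prod (ContinuousLinearMap.id ℝ _)) b :=
      HasFDerivAt.prodMk (hasFDerivAt_const a b) (hasFDerivAt_id b)
    have hcomp : HasFDerivAt (fun y => H a y)
        ((L (a, b)).comp ((0 : (Fin d → ℝ) →L[ℝ] (Fin d → ℝ)).prod (ContinuousLinearMap.id ℝ _)))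
        b := (hLd (a, b)).comp b hinner
    show fderiv ℝ (H a) b (Pi.single i 1) = _
    rw [hcomp.fderiv]
    simp
  have hHx_eq : ∀ a b i, Hx H a b i = L (a, b) (Pi.single i 1, 0) := by
    intro a b i
    have hinner : HasFDerivAt (fun y : Fin d → ℝ => (y, b))
        ((ContinuousLinearMap.id ℝ (Fin d → ℝ)).prod 0) a :=
      HasFDerivAt.prodMk (hasFDerivAt_id a) (hasFDerivAt_const b a)
    have hcomp : HasFDerivAt (fun y => H y b)
        ((L (a, b)).comp ((ContinuousLinearMap.id ℝ (Fin d → ℝ)).prod 0)) a :=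
      by have := (hLd (a, b)).comp a hinner; exact this
    show fderiv ℝ (fun y => H y b) a (Pi.single i 1) = _
    rw [hcomp.fderiv]
    simp
  -- Hp of Hbar
  have hHpbar : ∀ a b, Hp Hbar a b
      = Hp H a ((1 / 2 : ℝ) • b + (1 / 2 : ℝ) • pgrad S a) := by
    intro a b
    funext i
    set m := (1 / 2 : ℝ) • b + (1 / 2 : ℝ) • pgrad S a with hm
    have hinner : HasFDerivAt
        (fun c : Fin d → ℝ => (a, (1 / 2 : ℝ) • c + (1 / 2 : ℝ) • pgrad S a))
        ((0 : (Fin d → ℝ) →L[ℝ] (Fin d → ℝ)).prod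
          ((1 / 2 : ℝ) • ContinuousLinearMap.id ℝ (Fin d → ℝ))) b := by
      refine HasFDerivAt.prodMk (hasFDerivAt_const a b) ?_
      exact ((hasFDerivAt_id b).const_smul (1 / 2 : ℝ)).add_const _
    have hHbara : Hbar a = fun c => 2 * HF (a, (1 / 2 : ℝ) • c + (1 / 2 : ℝ) • pgrad S a) := by
      funext c; exact hHbar a c
    have hcomp : HasFDerivAt (Hbar a)
        ((2 : ℝ) • ((L (a, m)).comp
          ((0 : (Fin d → ℝ) →L[ℝ] (Fin d → ℝ)).prod
            ((1 / 2 : ℝ) • ContinuousLinearMap.id ℝ (Fin d → ℝ))))) b := by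
      rw [hHbara]
      exact ((hLd (a, m)).comp b hinner).const_mul 2
    show fderiv ℝ (Hbar a) b (Pi.single i 1) = _
    rw [hcomp.fderiv, hHp_eq]
    simp only [ContinuousLinearMap.smul_apply, ContinuousLinearMap.comp_apply,
      ContinuousLinearMap.prod_apply, ContinuousLinearMap.zero_apply,
      ContinuousLinearMap.coe_smul', Pi.smul_apply, ContinuousLinearMap.coe_id', id_eq,
      smul_eq_mul]
    have : ((0 : Fin d → ℝ), (1 / 2 : ℝ) • (Pi.single i 1 : Fin d → ℝ))
        = (1 / 2 : ℝ) • ((0 : Fin d → ℝ), (Pi.single i 1 : Fin d → ℝ)) := by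
      simp [Prod.smul_mk]
    rw [this, map_smul]
    simp
  -- Hx of Hbar
  have hHxbar : ∀ a b i, Hx Hbar a b i
      = 2 * Hx H a ((1 / 2 : ℝ) • b + (1 / 2 : ℝ) • pgrad S a) i
        + L (a, (1 / 2 : ℝ) • b + (1 / 2 : ℝ) • pgrad S a)
            (0, phiAux d (S'' a (Pi.single i 1))) := by
    intro a b i
    set m := (1 / 2 : ℝ) • b + (1 / 2 : ℝ) • pgrad S a with hm
    have hinner : HasFDerivAt
        (fun y : Fin d → ℝ => (y, (1 / 2 : ℝ) • b + (1 / 2 : ℝ) • pgrad S y))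
        ((ContinuousLinearMap.id ℝ (Fin d → ℝ)).prod
          ((1 / 2 : ℝ) • ((phiAux d).comp (S'' a)))) a := by
      refine HasFDerivAt.prodMk (hasFDerivAt_id a) ?_
      exact (((hgd a).const_smul (1 / 2 : ℝ)).const_add _)
    have hHbarb : (fun y => Hbar y b)
        = fun y => 2 * HF (y, (1 / 2 : ℝ) • b + (1 / 2 : ℝ) • pgrad S y) := by
      funext y; exact hHbar y b
    have hcomp : HasFDerivAt (fun y => Hbar y b)
        ((2 : ℝ) • ((L (a, m)).comp
          ((ContinuousLinearMap.id ℝ (Fin d → ℝ)).prod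
            ((1 / 2 : ℝ) • ((phiAux d).comp (S'' a)))))) a := by
      rw [hHbarb]
      exact ((hLd (a, m)).comp a hinner).const_mul 2
    show fderiv ℝ (fun y => Hbar y b) a (Pi.single i 1) = _
    rw [hcomp.fderiv, hHx_eq]
    simp only [ContinuousLinearMap.smul_apply, ContinuousLinearMap.comp_apply,
      ContinuousLinearMap.prod_apply, ContinuousLinearMap.coe_id', id_eq,
      ContinuousLinearMap.coe_smul', Pi.smul_apply, smul_eq_mul]
    have hsplit : ((Pi.single i 1 : Fin d → ℝ),
        (1 / 2 : ℝ) • phiAux d (S'' a (Pi.single i 1)))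
        = ((Pi.single i 1 : Fin d → ℝ), (0 : Fin d → ℝ))
          + (1 / 2 : ℝ) • ((0 : Fin d → ℝ), phiAux d (S'' a (Pi.single i 1))) := by
      simp [Prod.ext_iff]
    rw [hsplit, map_add, map_smul]
    simp only [smul_eq_mul]
    ring
  -- the momentum variables match up
  have hmq : ∀ t, (1 / 2 : ℝ) • q t + (1 / 2 : ℝ) • pgrad S (x t) = p t := by
    intro t; rw [hq t]; module
  have hxeq : ∀ t, Hp Hbar (x t) (q t) = Hp H (x t) (p t) := by
    intro t; rw [hHpbar, hmq]
  -- the key identity on forces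
  have hkey : ∀ s, -(Hx Hbar (x s) (q s))
      = (2 : ℝ) • (-(Hx H (x s) (p s))) - phiAux d (S'' (x s) (Hp H (x s) (p s))) := by
    intro s
    funext i
    have h1 := hHxbar (x s) (q s) i
    rw [hmq s] at h1
    set a := x s
    set b := p s
    set Tm : (Fin d → ℝ) →L[ℝ] ℝ := (L (a, b)).comp
      ((0 : (Fin d → ℝ) →L[ℝ] (Fin d → ℝ)).prod (ContinuousLinearMap.id ℝ _)) with hTm
    have hTme : ∀ w, Tm w = L (a, b) (0, w) := by intro w; simp [hTm]
    have hTsingle : (fun j => Tm (Pi.single j 1)) = Hp H a b := by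
      funext j; rw [hTme, hHp_eq]
    have hk := key_symm Tm (S'' a) (hsymm a) i
    rw [hTsingle, hTme] at hk
    simp only [Pi.neg_apply, Pi.sub_apply, Pi.smul_apply, smul_eq_mul, h1,
      phiAux_apply]
    rw [← hsymm a] at hk
    rw [hk]
    have : S'' a (Pi.single i 1) (Hp H a b) = S'' a (Hp H a b) (Pi.single i 1) := by
      rw [clm_eq_sum' (S'' a (Pi.single i 1)) (Hp H a b),
        clm_eq_sum' (S'' a) (Hp H a b)]
      rw [ContinuousLinearMap.sum_apply]
      exact Finset.sum_congr rfl fun j _ => by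
        simp only [smul_eq_mul, ContinuousLinearMap.smul_apply]
        rw [hsymm a (Pi.single i 1) (Pi.single j 1)]
    rw [this]
    ring
  constructor
  · intro h t ht
    obtain ⟨hx', hp'⟩ := h t ht
    constructor
    · rw [hxeq t]; exact hx'
    · rw [hkey t]
      have hqe : q = fun s => (2 : ℝ) • p s - pgrad S (x s) := funext hq
      rw [hqe]
      have hgc : HasDerivAt (fun s => pgrad S (x s))
          (phiAux d (S'' (x t) (Hp H (x t) (p t)))) t :=
        (hgd (x t)).comp_hasDerivAt t hx'
      exact (hp'.const_smul (2 : ℝ)).sub hgc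
  · intro h t ht
    obtain ⟨hx'b, hq'b⟩ := h t ht
    rw [hxeq t] at hx'b
    refine ⟨hx'b, ?_⟩
    have hgc : HasDerivAt (fun s => pgrad S (x s))
        (phiAux d (S'' (x t) (Hp H (x t) (p t)))) t :=
      (hgd (x t)).comp_hasDerivAt t hx'b
    have hpd : HasDerivAt (fun s => (1 / 2 : ℝ) • q s + (1 / 2 : ℝ) • pgrad S (x s))
        ((1 / 2 : ℝ) • (-(Hx Hbar (x t) (q t)))
          + (1 / 2 : ℝ) • phiAux d (S'' (x t) (Hp H (x t) (p t)))) t :=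
      (hq'b.const_smul (1 / 2 : ℝ)).add (hgc.const_smul (1 / 2 : ℝ))
    have hpe : p = fun s => (1 / 2 : ℝ) • q s + (1 / 2 : ℝ) • pgrad S (x s) :=
      funext fun s => (hmq s).symm
    rw [← hpe] at hpd
    have hd : (1 / 2 : ℝ) • (-(Hx Hbar (x t) (q t)))
        + (1 / 2 : ℝ) • phiAux d (S'' (x t) (Hp H (x t) (p t)))
        = -(Hx H (x t) (p t)) := by
      rw [hkey t]; module
    rwa [hd] at hpd
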